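/- If a graph G is proportionally k-choosable, then G is proportionally (k+1)-choosable. -/

import Mathlib

open Finset

/-- The multiplicity of a color `c` in a list assignment `L`: the number of
vertices whose list contains `c`. -/
def eta {V : Type*} [Fintype V] (L : V → Finset ℕ) (c : ℕ) : ℕ :=
  (Finset.univ.filter fun v => c ∈ L v).card

section NumLemmas

private lemma div_decomp (m x : ℕ) (hm : 0 < m) :
    ∃ q r, r < m ∧ m * q + r = x ∧ x / m = q := by
  refine ⟨x/m, x % m, Nat.mod_lt _ hm, Nat.div_add_mod x m, rfl⟩

lemma hiN_spec (k η : ℕ) : η ≤ (k+1) * (η - k * (η/(k+1))) := by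
  obtain ⟨q, r, hr, hqr, hq⟩ := div_decomp (k+1) η (by omega)
  rw [hq]
  have e1 : (k+1) * q = k*q + q := by ring
  have e4 : (k+1)*(q+r) = k*q + q + (k*r + r) := by ring
  have e3 : η - k*q = q + r := by omega
  rw [e3]; omega

lemma loN_spec (k η : ℕ) : (k+1) * (η - k * ((η+k)/(k+1))) ≤ η := by
  obtain ⟨cl, s, hs, hcs, hcl⟩ := div_decomp (k+1) (η+k) (by omega)
  rw [hcl]
  have e1 : (k+1) * cl = k*cl + cl := by ring
  have hη : η ≤ k*cl + cl := by omega
  rcases Nat.le_total η (k*cl) with hle | hle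
  · have e0 : η - k*cl = 0 := by omega
    simp [e0]
  · have hlo : η - k*cl ≤ cl := by omega
    have h3 : k * (η - k*cl) ≤ k * cl := Nat.mul_le_mul_left k hlo
    have e2 : (k+1) * (η - k*cl) = k*(η - k*cl) + (η - k*cl) := by ring
    omega

lemma ceil_mul_ge (k η : ℕ) : η ≤ (k+1) * ((η + k)/(k+1)) := by
  obtain ⟨cl, s, hs, hcs, hcl⟩ := div_decomp (k+1) (η+k) (by omega)
  rw [hcl]; omega

lemma loN_le_hiN (k η : ℕ) : η - k * ((η+k)/(k+1)) ≤ η - k * (η/(k+1)) := by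
  apply Nat.sub_le_sub_left
  exact Nat.mul_le_mul_left k (Nat.div_le_div_right (by omega))

lemma clN_le (k η : ℕ) : (η + k)/(k+1) ≤ η/(k+1) + 1 := by
  have h1 : (η + (k+1))/(k+1) = η/(k+1) + 1 := Nat.add_div_right η (by omega)
  calc (η + k)/(k+1) ≤ (η + (k+1))/(k+1) := Nat.div_le_div_right (by omega)
    _ = η/(k+1) + 1 := h1

lemma qN_le_clN (k η : ℕ) : η/(k+1) ≤ (η + k)/(k+1) :=
  Nat.div_le_div_right (by omega)

end NumLemmas

section DoubleCount

variable {V : Type*} [Fintype V]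

lemma sum_eta (L : V → Finset ℕ) (S : Finset ℕ) :
    ∑ c ∈ S, eta L c = ∑ v : V, ((L v) ∩ S).card := by
  unfold eta
  simp_rw [Finset.card_filter]
  rw [Finset.sum_comm]
  refine Finset.sum_congr rfl fun v _ => ?_
  rw [Finset.inter_comm, ← Finset.filter_mem_eq_inter, Finset.card_filter]

end DoubleCount



section Slots

/-- slots of color c: pairs (c, i) for i < hi c -/
def slotF (hi : ℕ → ℕ) (c : ℕ) : Finset (ℕ × ℕ) :=
  (range (hi c)).image fun i => (c, i)

def optF (hi lo : ℕ → ℕ) (c : ℕ) : Finset (ℕ × ℕ) :=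
  ((range (hi c)).filter fun i => lo c ≤ i).image fun i => (c, i)

lemma mem_slotF {hi : ℕ → ℕ} {c : ℕ} {p : ℕ × ℕ} :
    p ∈ slotF hi c ↔ p.1 = c ∧ p.2 < hi c := by
  constructor
  · rintro hp
    obtain ⟨i, hi', rfl⟩ := Finset.mem_image.mp hp
    exact ⟨rfl, Finset.mem_range.mp hi'⟩
  · rintro ⟨h1, h2⟩
    exact Finset.mem_image.mpr ⟨p.2, Finset.mem_range.mpr h2, by rw [← h1]⟩

lemma mem_optF {hi lo : ℕ → ℕ} {c : ℕ} {p : ℕ × ℕ} :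
    p ∈ optF hi lo c ↔ p.1 = c ∧ p.2 < hi c ∧ lo c ≤ p.2 := by
  constructor
  · rintro hp
    obtain ⟨i, hi', rfl⟩ := Finset.mem_image.mp hp
    obtain ⟨h1, h2⟩ := Finset.mem_filter.mp hi'
    exact ⟨rfl, Finset.mem_range.mp h1, h2⟩
  · rintro ⟨h1, h2, h3⟩
    exact Finset.mem_image.mpr ⟨p.2,
      Finset.mem_filter.mpr ⟨Finset.mem_range.mpr h2, h3⟩, by rw [← h1]⟩

lemma optF_subset_slotF (hi lo : ℕ → ℕ) (c : ℕ) : optF hi lo c ⊆ slotF hi c :=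
  Finset.image_subset_image (Finset.filter_subset _ _)

lemma card_slotF (hi : ℕ → ℕ) (c : ℕ) : (slotF hi c).card = hi c := by
  rw [slotF, Finset.card_image_of_injective _ (fun a b hab => (Prod.mk.injEq _ _ _ _).mp hab |>.2),
    Finset.card_range]

lemma card_optF (hi lo : ℕ → ℕ) (c : ℕ) : (optF hi lo c).card = hi c - lo c := by
  rw [optF, Finset.card_image_of_injective _ (fun a b hab => (Prod.mk.injEq _ _ _ _).mp hab |>.2)]
  have : (range (hi c)).filter (fun i => lo c ≤ i) = Finset.Ico (lo c) (hi c) := by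
    ext i; simp [Finset.mem_filter, Finset.mem_range, Finset.mem_Ico, and_comm]
  rw [this, Nat.card_Ico]

lemma card_biUnion_slotF (hi : ℕ → ℕ) (S : Finset ℕ) :
    (S.biUnion (slotF hi)).card = ∑ c ∈ S, hi c := by
  rw [Finset.card_biUnion]
  · exact Finset.sum_congr rfl fun c _ => card_slotF hi c
  · intro c _ c' _ hcc'
    rw [Function.onFun, Finset.disjoint_left]
    intro p hp hp'
    exact hcc' ((mem_slotF.mp hp).1 ▸ (mem_slotF.mp hp').1.symm ▸ rfl)

lemma card_biUnion_optF (hi lo : ℕ → ℕ) (S : Finset ℕ) :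
    (S.biUnion (optF hi lo)).card = ∑ c ∈ S, (hi c - lo c) := by
  rw [Finset.card_biUnion]
  · exact Finset.sum_congr rfl fun c _ => card_optF hi lo c
  · intro c _ c' _ hcc'
    rw [Function.onFun, Finset.disjoint_left]
    intro p hp hp'
    exact hcc' ((mem_optF.mp hp).1 ▸ (mem_optF.mp hp').1.symm ▸ rfl)

end Slots

/-- IsProportionalColoring -/
def IsProportionalColoring {V : Type*} [Fintype V] (G : SimpleGraph V) (k : ℕ)
    (L : V → Finset ℕ) (f : V → ℕ) : Prop :=
  (∀ v, f v ∈ L v) ∧ (∀ u v, G.Adj u v → f u ≠ f v) ∧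
  ∀ c, (∃ v, c ∈ L v) →
    (Finset.univ.filter fun v => f v = c).card = eta L c / k ∨
    (Finset.univ.filter fun v => f v = c).card = (eta L c + k - 1) / k

def ProportionallyChoosable {V : Type*} [Fintype V] (G : SimpleGraph V) (k : ℕ) : Prop :=
  ∀ L : V → Finset ℕ, (∀ v, (L v).card = k) → ∃ f : V → ℕ, IsProportionalColoring G k L f


lemma exists_deletion {V : Type*} [Fintype V] (k : ℕ) (hk : 1 ≤ k) (L : V → Finset ℕ)
    (hL : ∀ v, (L v).card = k + 1) :
    ∃ g : V → ℕ, (∀ v, g v ∈ L v) ∧ ∀ c,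
      eta L c - k * ((eta L c + k) / (k+1)) ≤ (univ.filter fun v => g v = c).card ∧
      (univ.filter fun v => g v = c).card ≤ eta L c - k * (eta L c / (k+1)) := by
  classical
  set hi : ℕ → ℕ := fun c => eta L c - k * (eta L c / (k+1)) with hhi
  set lo : ℕ → ℕ := fun c => eta L c - k * ((eta L c + k) / (k+1)) with hlo
  set C : Finset ℕ := univ.biUnion L with hC
  have hLC : ∀ v : V, L v ⊆ C := fun v => subset_biUnion_of_mem L (mem_univ v)
  set n := Fintype.card V with hn
  -- total eta over C
  have hsumC : ∑ c ∈ C, eta L c = (k+1) * n := by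
    rw [sum_eta]
    rw [Finset.sum_congr rfl (fun v (_ : v ∈ univ) => by
      rw [Finset.inter_eq_left.mpr (hLC v), hL v])]
    simp [hn, Finset.card_univ, mul_comm]
  set N := ∑ c ∈ C, hi c with hN
  have hNn : n ≤ N := by
    have h1 : (k+1) * n ≤ (k+1) * N := by
      rw [← hsumC, hN, Finset.mul_sum]
      exact Finset.sum_le_sum fun c _ => hiN_spec k (eta L c)
    exact Nat.le_of_mul_le_mul_left h1 (by omega)
  set D := N - n with hD
  set t : V ⊕ Fin D → Finset (ℕ × ℕ) :=
    Sum.elim (fun v => (L v).biUnion (slotF hi)) (fun _ => C.biUnion (optF hi lo)) with ht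
  -- generic counting facts
  have key1 : ∀ AV : Finset V, AV.card ≤ ∑ c ∈ AV.biUnion L, hi c := by
    intro AV
    have h1 : (k+1) * AV.card ≤ ∑ c ∈ AV.biUnion L, eta L c := by
      rw [sum_eta]
      calc (k+1) * AV.card = ∑ v ∈ AV, (k+1) := by rw [Finset.sum_const, smul_eq_mul, mul_comm]
        _ = ∑ v ∈ AV, ((L v) ∩ (AV.biUnion L)).card := by
            refine Finset.sum_congr rfl fun v hv => ?_
            rw [Finset.inter_eq_left.mpr (Finset.subset_biUnion_of_mem L hv), hL v]
        _ ≤ ∑ v : V, ((L v) ∩ (AV.biUnion L)).card :=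
            Finset.sum_le_sum_of_subset (Finset.subset_univ AV)
    have h2 : ∑ c ∈ AV.biUnion L, eta L c ≤ (k+1) * ∑ c ∈ AV.biUnion L, hi c := by
      rw [Finset.mul_sum]
      exact Finset.sum_le_sum fun c _ => hiN_spec k (eta L c)
    exact Nat.le_of_mul_le_mul_left (h1.trans h2) (by omega)
  have key2 : ∀ AV : Finset V, ∑ c ∈ C \ AV.biUnion L, lo c ≤ n - AV.card := by
    intro AV
    have h1 : (k+1) * ∑ c ∈ C \ AV.biUnion L, lo c ≤ ∑ c ∈ C \ AV.biUnion L, eta L c := by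
      rw [Finset.mul_sum]
      exact Finset.sum_le_sum fun c _ => loN_spec k (eta L c)
    have h2 : ∑ c ∈ C \ AV.biUnion L, eta L c ≤ (k+1) * (n - AV.card) := by
      rw [sum_eta]
      have hzero : ∀ v ∈ AV, ((L v) ∩ (C \ AV.biUnion L)).card = 0 := by
        intro v hv
        rw [Finset.card_eq_zero, Finset.eq_empty_iff_forall_notMem]
        intro c hc
        obtain ⟨hc1, hc2⟩ := Finset.mem_inter.mp hc
        exact (Finset.mem_sdiff.mp hc2).2 (Finset.mem_biUnion.mpr ⟨v, hv, hc1⟩)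
      have hbound : ∀ v : V, ((L v) ∩ (C \ AV.biUnion L)).card ≤ k + 1 := by
        intro v
        calc ((L v) ∩ (C \ AV.biUnion L)).card ≤ (L v).card :=
              Finset.card_le_card (Finset.inter_subset_left)
          _ = k + 1 := hL v
      calc ∑ v : V, ((L v) ∩ (C \ AV.biUnion L)).card
          = ∑ v ∈ univ \ AV, ((L v) ∩ (C \ AV.biUnion L)).card := by
            rw [← Finset.sum_sdiff (Finset.subset_univ AV)]
            rw [Finset.sum_congr rfl hzero]
            simp
        _ ≤ ∑ v ∈ univ \ AV, (k+1) := Finset.sum_le_sum fun v _ => hbound v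
        _ = (univ \ AV).card * (k+1) := by rw [Finset.sum_const, smul_eq_mul]
        _ = (n - AV.card) * (k+1) := by rw [Finset.card_sdiff_of_subset (Finset.subset_univ AV), Finset.card_univ]
        _ = (k+1) * (n - AV.card) := mul_comm _ _
    exact Nat.le_of_mul_le_mul_left (h1.trans h2) (by omega)
  -- Hall's condition
  have hall : ∀ s : Finset (V ⊕ Fin D), s.card ≤ (s.biUnion t).card := by
    intro s
    set AV := s.toLeft with hAV
    set CA := AV.biUnion L with hCA
    have hCAC : CA ⊆ C := Finset.biUnion_subset.mpr fun v _ => hLC v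
    have hsub1 : CA.biUnion (slotF hi) ⊆ s.biUnion t := by
      intro p hp
      obtain ⟨c, hc, hpc⟩ := Finset.mem_biUnion.mp hp
      obtain ⟨v, hv, hcv⟩ := Finset.mem_biUnion.mp hc
      refine Finset.mem_biUnion.mpr ⟨Sum.inl v, Finset.mem_toLeft.mp hv, ?_⟩
      exact Finset.subset_biUnion_of_mem (slotF hi) hcv hpc
    rcases Finset.eq_empty_or_nonempty s.toRight with hADe | hAD
    · -- no dummy vertices
      have hcard : s.card = AV.card := by
        rw [← Finset.card_toLeft_add_card_toRight (u := s), hADe]; simp; rfl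
      calc s.card = AV.card := hcard
        _ ≤ ∑ c ∈ CA, hi c := key1 AV
        _ = (CA.biUnion (slotF hi)).card := (card_biUnion_slotF hi CA).symm
        _ ≤ (s.biUnion t).card := Finset.card_le_card hsub1
    · -- some dummy vertex present
      obtain ⟨d, hd⟩ := hAD
      have hsub2 : (C \ CA).biUnion (optF hi lo) ⊆ s.biUnion t := by
        intro p hp
        refine Finset.mem_biUnion.mpr ⟨Sum.inr d, Finset.mem_toRight.mp hd, ?_⟩
        exact Finset.biUnion_subset_biUnion_of_subset_left _ (Finset.sdiff_subset) hp
      have hdisj : Disjoint (CA.biUnion (slotF hi)) ((C \ CA).biUnion (optF hi lo)) := by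
        rw [Finset.disjoint_left]
        intro p hp hp'
        obtain ⟨c, hc, hpc⟩ := Finset.mem_biUnion.mp hp
        obtain ⟨c', hc', hpc'⟩ := Finset.mem_biUnion.mp hp'
        have e1 := (mem_slotF.mp hpc).1
        have e2 := (mem_optF.mp hpc').1
        have e3 : c = c' := e1.symm.trans e2
        exact (Finset.mem_sdiff.mp hc').2 (e3 ▸ hc)
      have hsub : CA.biUnion (slotF hi) ∪ (C \ CA).biUnion (optF hi lo) ⊆ s.biUnion t :=
        Finset.union_subset hsub1 hsub2
      have hADcard : s.toRight.card ≤ D := by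
        calc s.toRight.card ≤ (univ : Finset (Fin D)).card := Finset.card_le_univ _
          _ = D := by simp
      have hsum_split : ∑ c ∈ CA, hi c + ∑ c ∈ C \ CA, hi c = N := by
        rw [hN, ← Finset.sum_sdiff hCAC]; omega
      have hsum_sub : ∑ c ∈ C \ CA, (hi c - lo c) + ∑ c ∈ C \ CA, lo c = ∑ c ∈ C \ CA, hi c := by
        rw [← Finset.sum_add_distrib]
        exact Finset.sum_congr rfl fun c _ => Nat.sub_add_cancel (loN_le_hiN k (eta L c))
      have hkey1 : AV.card ≤ ∑ c ∈ CA, hi c := key1 AV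
      have hkey2 : ∑ c ∈ C \ CA, lo c ≤ n - AV.card := key2 AV
      have hDineq : s.toRight.card ≤ N - n := hADcard
      have hAVn : AV.card ≤ n := by rw [hn, ← Finset.card_univ]; exact Finset.card_le_univ _
      calc s.card = AV.card + s.toRight.card := (Finset.card_toLeft_add_card_toRight (u := s)).symm
        _ ≤ (CA.biUnion (slotF hi) ∪ (C \ CA).biUnion (optF hi lo)).card := by
            rw [Finset.card_union_of_disjoint hdisj, card_biUnion_slotF, card_biUnion_optF]
            omega
        _ ≤ (s.biUnion t).card := Finset.card_le_card hsub
  -- apply Hall's theorem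
  obtain ⟨F, hFinj, hFmem⟩ := (Finset.all_card_le_biUnion_card_iff_exists_injective t).mp hall
  set g : V → ℕ := fun v => (F (Sum.inl v)).1 with hg
  have hgood : ∀ v : V, g v ∈ L v ∧ (F (Sum.inl v)).2 < hi (g v) := by
    intro v
    have := hFmem (Sum.inl v)
    simp only [ht, Sum.elim_inl] at this
    obtain ⟨c, hc, hpc⟩ := Finset.mem_biUnion.mp this
    obtain ⟨e1, e2⟩ := mem_slotF.mp hpc
    show (F (Sum.inl v)).1 ∈ L v ∧ (F (Sum.inl v)).2 < hi ((F (Sum.inl v)).1)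
    rw [e1]
    exact ⟨hc, e2⟩
  -- surjectivity onto all slots
  have himage : Finset.univ.image F = C.biUnion (slotF hi) := by
    apply Finset.eq_of_subset_of_card_le
    · intro p hp
      obtain ⟨x, _, rfl⟩ := Finset.mem_image.mp hp
      have := hFmem x
      cases x with
      | inl v =>
        simp only [ht, Sum.elim_inl] at this
        exact Finset.biUnion_subset_biUnion_of_subset_left _ (hLC v) this
      | inr d =>
        simp only [ht, Sum.elim_inr] at this
        obtain ⟨c, hc, hpc⟩ := Finset.mem_biUnion.mp this
        exact Finset.mem_biUnion.mpr ⟨c, hc, optF_subset_slotF hi lo c hpc⟩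
    · rw [card_biUnion_slotF, Finset.card_image_of_injective _ hFinj]
      rw [Finset.card_univ, Fintype.card_sum, Fintype.card_fin]
      rw [← hn, ← hN]
      omega
  refine ⟨g, fun v => (hgood v).1, fun c => ⟨?_, ?_⟩⟩
  · -- lower bound : lo c ≤ d c
    by_cases hcC : c ∈ C
    · -- surjectivity argument
      have hsurj : ∀ i, i < lo c → ∃ v, g v = c ∧ (F (Sum.inl v)).2 = i := by
        intro i hi'
        have hilt : i < hi c := lt_of_lt_of_le hi' (loN_le_hiN k (eta L c))
        have hmem : ((c, i) : ℕ × ℕ) ∈ C.biUnion (slotF hi) :=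
          Finset.mem_biUnion.mpr ⟨c, hcC, mem_slotF.mpr ⟨rfl, hilt⟩⟩
        rw [← himage] at hmem
        obtain ⟨x, _, hx⟩ := Finset.mem_image.mp hmem
        cases x with
        | inl v =>
          refine ⟨v, ?_, ?_⟩
          · show (F (Sum.inl v)).1 = c
            rw [hx]
          · rw [hx]
        | inr d =>
          exfalso
          have := hFmem (Sum.inr d)
          simp only [ht, Sum.elim_inr] at this
          rw [hx] at this
          obtain ⟨c', hc', hpc'⟩ := Finset.mem_biUnion.mp this
          obtain ⟨e1, e2, e3⟩ := mem_optF.mp hpc'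
          have e1' : c = c' := e1
          have e3' : lo c' ≤ i := e3
          rw [← e1'] at e3'
          omega
      have : (Finset.range (lo c)).card ≤ (univ.filter fun v => g v = c).card := by
        apply Finset.card_le_card_of_surjOn (fun v => (F (Sum.inl v)).2)
        intro i hi'
        obtain ⟨v, hv1, hv2⟩ := hsurj i (Finset.mem_range.mp (Finset.mem_coe.mp hi'))
        exact ⟨v, Finset.mem_coe.mpr (Finset.mem_filter.mpr ⟨Finset.mem_univ v, hv1⟩), hv2⟩
      rwa [Finset.card_range] at this
    · -- c not in any list: eta = 0
      have : eta L c = 0 := by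
        rw [eta, Finset.card_eq_zero, Finset.filter_eq_empty_iff]
        intro v _ hcv
        exact hcC (hLC v hcv)
      simp [hlo, this]
  · -- upper bound : d c ≤ hi c
    have : (univ.filter fun v => g v = c).card ≤ (Finset.range (hi c)).card := by
      apply Finset.card_le_card_of_injOn (fun v => (F (Sum.inl v)).2)
      · intro v hv
        have hgv : g v = c := (Finset.mem_filter.mp hv).2
        exact Finset.mem_range.mpr (hgv ▸ (hgood v).2)
      · intro v hv v' hv' heq
        have h1 : g v = c := (Finset.mem_filter.mp (Finset.mem_coe.mp hv)).2
        have h2 : g v' = c := (Finset.mem_filter.mp (Finset.mem_coe.mp hv')).2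
        have : F (Sum.inl v) = F (Sum.inl v') := by
          have e1 : F (Sum.inl v) = (g v, (F (Sum.inl v)).2) := rfl
          have e2 : F (Sum.inl v') = (g v', (F (Sum.inl v')).2) := rfl
          have heq' : (F (Sum.inl v)).2 = (F (Sum.inl v')).2 := heq
          rw [e1, e2, h1, h2, heq']
        exact Sum.inl.inj (hFinj this)
    rwa [Finset.card_range] at this

theorem stmt_5 {V : Type*} [Fintype V] (G : SimpleGraph V) (k : ℕ)
    (h : ProportionallyChoosable G k) : ProportionallyChoosable G (k + 1) := by
  intro L hL
  rcases Nat.eq_zero_or_pos k with rfl | hk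
  · -- k = 0 : the hypothesis is vacuous or V is empty
    by_cases hV : Nonempty V
    · obtain ⟨f, hf1, -, -⟩ := h (fun _ => (∅ : Finset ℕ)) (fun v => rfl)
      exact absurd (hf1 (Classical.choice hV)) (Finset.notMem_empty _)
    · exact ⟨fun _ => 0, fun v => absurd ⟨v⟩ hV, fun u v _ => absurd ⟨u⟩ hV,
        fun c hc => absurd ⟨hc.choose⟩ hV⟩
  · classical
    obtain ⟨g, hg1, hg2⟩ := exists_deletion k hk L hL
    set L' : V → Finset ℕ := fun v => (L v).erase (g v) with hL'def
    have hL' : ∀ v, (L' v).card = k := by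
      intro v
      rw [hL'def, Finset.card_erase_of_mem (hg1 v), hL v]
      omega
    obtain ⟨f, hf1, hf2, hf3⟩ := h L' hL'
    have heta' : ∀ c, eta L' c = eta L c - (univ.filter fun v => g v = c).card := by
      intro c
      have hBA : (univ.filter fun v => g v = c) ⊆ (univ.filter fun v => c ∈ L v) := by
        intro v hv
        obtain ⟨-, hgv⟩ := Finset.mem_filter.mp hv
        exact Finset.mem_filter.mpr ⟨Finset.mem_univ v, hgv ▸ hg1 v⟩
      have hsd : (univ.filter fun v => c ∈ L' v)
          = (univ.filter fun v => c ∈ L v) \ (univ.filter fun v => g v = c) := by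
        ext v
        simp only [Finset.mem_filter, Finset.mem_sdiff, Finset.mem_univ, true_and, hL'def,
          Finset.mem_erase]
        constructor
        · rintro ⟨hne, hm⟩; exact ⟨hm, fun hgv => hne hgv.symm⟩
        · rintro ⟨hm, hne⟩; exact ⟨fun hcg => hne hcg.symm, hm⟩
      show (univ.filter fun v => c ∈ L' v).card = _
      rw [hsd, Finset.card_sdiff_of_subset hBA]
      rfl
    refine ⟨f, fun v => Finset.mem_of_mem_erase (hf1 v), hf2, ?_⟩
    intro c hc
    obtain ⟨hdlo, hdhi⟩ := hg2 c
    have hkq : k * (eta L c / (k+1)) ≤ eta L c := by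
      calc k * (eta L c/(k+1)) ≤ (k+1) * (eta L c/(k+1)) :=
            Nat.mul_le_mul_right _ (by omega)
        _ ≤ eta L c := Nat.mul_div_le _ _
    have h1 : k * (eta L c / (k+1)) ≤ eta L' c := by rw [heta' c]; omega
    have h2 : eta L' c ≤ k * ((eta L c + k)/(k+1)) := by rw [heta' c]; omega
    rcases Nat.eq_zero_or_pos (eta L' c) with hz | hpos
    · have hcnt : (univ.filter fun v => f v = c).card = 0 := by
        rw [Finset.card_eq_zero, Finset.filter_eq_empty_iff]
        intro v _ hfv
        have hmem : c ∈ L' v := hfv ▸ hf1 v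
        have : 0 < eta L' c :=
          Finset.card_pos.mpr ⟨v, Finset.mem_filter.mpr ⟨Finset.mem_univ v, hmem⟩⟩
        omega
      have hq0 : eta L c / (k+1) = 0 := by
        have h0 : k * (eta L c/(k+1)) = 0 := by omega
        rcases Nat.mul_eq_zero.mp h0 with h' | h'
        · omega
        · exact h'
      rw [hcnt]
      left
      omega
    · have hex' : ∃ v, c ∈ L' v := by
        obtain ⟨v, hv⟩ := Finset.card_pos.mp hpos
        exact ⟨v, (Finset.mem_filter.mp hv).2⟩
      have hNc := hf3 c hex'
      have hfl : eta L c/(k+1) ≤ eta L' c / k := by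
        rw [Nat.le_div_iff_mul_le (by omega : 0 < k)]
        calc eta L c/(k+1) * k = k * (eta L c/(k+1)) := mul_comm _ _
          _ ≤ eta L' c := h1
      have hcu : (eta L' c + k - 1)/k ≤ (eta L c + k)/(k+1) := by
        rw [Nat.div_le_iff_le_mul_add_pred (by omega : 0 < k)]
        omega
      have hmono : eta L' c / k ≤ (eta L' c + k - 1)/k := Nat.div_le_div_right (by omega)
      have hclq := clN_le k (eta L c)
      have hqcl := qN_le_clN k (eta L c)
      have heq1 : eta L c + (k+1) - 1 = eta L c + k := by omega
      rw [heq1]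
      rcases hNc with hh | hh <;> rw [hh] <;> omega
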